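/- For positive integers m > n, with a = m² − n², b = 2mn, k = 4mn(m² + n²), and l = (m − n)²(m + n)², one has the identity (a³k)² + (b³l)² = (4mn(m⁴ + n⁴)(m − n)²(m + n)²)². -/
import Mathlib


theorem stmt_10 (m n a b k l : ℤ) (hn : 0 < n) (hmn : n < m)
    (ha : a = m ^ 2 - n ^ 2) (hb : b = 2 * m * n)
    (hk : k = 4 * m * n * (m ^ 2 + n ^ 2)) (hl : l = (m - n) ^ 2 * (m + n) ^ 2) :
    (a ^ 3 * k) ^ 2 + (b ^ 3 * l) ^ 2 =
      (4 * m * n * (m ^ 4 + n ^ 4) * (m - n) ^ 2 * (m + n) ^ 2) ^ 2 := by subst ha hb hk hl; ring
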